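/- There exists a constant C > 0 such that for every twice continuously differentiable function v : ℝ⁴ \ {0} → ℝ and every measurable function w : ℝ⁴ \ {0} → ℝ, one has ( ∫_{ℝ⁴\{0}} |w(x)·v(x)|³ ‖x‖² dx )^{1/3} ≤ C · [ Σ_{j=0}^{2} ( ∫_{ℝ⁴\{0}} ‖D^j v(y)‖³ ‖y‖^{3j-1} dy )^{1/3} ] · ( ∫_{ℝ⁴\{0}} |w(y)|³ ‖y‖^{-1} dy )^{1/3}, with the inequality interpreted as trivially true when the right-hand side is infinite. -/

import Mathlib

open MeasureTheory Metric Set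
open scoped ENNReal NNReal

noncomputable section

namespace WeightedAux

local notation "E4" => EuclideanSpace ℝ (Fin 4)

lemma finrank_E4 : Module.finrank ℝ (EuclideanSpace ℝ (Fin 4)) = 4 := by
  simp [finrank_euclideanSpace]

/-- Change of variables for a scaled-translated lintegral. -/
lemma lintegral_comp_affine (g : E4 → ℝ≥0∞) (hg : Measurable g) {a : ℝ} (ha : a ≠ 0) (c : E4) :
    ∫⁻ y, g (a • y + c) = ENNReal.ofReal (abs (a ^ 4)⁻¹) * ∫⁻ z, g z := by
  have h1 : ∫⁻ z, g (z + c) ∂(volume.map ((a : ℝ) • · : E4 → E4)) = ∫⁻ y, g (a • y + c) ∂volume :=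
    lintegral_map (f := fun z => g (z + c)) (hg.comp (measurable_add_const c))
      (measurable_const_smul a)
  rw [← h1, MeasureTheory.Measure.map_addHaar_smul volume ha, finrank_E4, lintegral_smul_measure]
  congr 1
  exact lintegral_add_right_eq_self g c


/-- Second-order Taylor estimate along the segment from `y` to `x`. -/
lemma taylor_bound {v : EuclideanSpace ℝ (Fin 4) → ℝ}
    (hv : ContDiffOn ℝ 2 v ({0}ᶜ : Set E4))
    {x y : E4} (hB : Metric.closedBall x (‖x‖ / 2) ⊆ ({0}ᶜ : Set E4))
    (hy : y ∈ Metric.closedBall x (‖x‖ / 2)) :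
    |v x| ≤ |v y| + ‖fderiv ℝ v y‖ * (‖x‖ / 2) +
      (‖x‖ / 2) ^ 2 *
        ∫ t in (0:ℝ)..1, (1 - t) * ‖fderiv ℝ (fderiv ℝ v) (y + t • (x - y))‖ := by
  set ρ : ℝ := ‖x‖ / 2 with hρ
  set u : E4 := x - y with hu
  set γ : ℝ → E4 := fun t => y + t • u with hγ
  have hunorm : ‖u‖ ≤ ρ := by
    have := mem_closedBall.1 hy
    rw [dist_eq_norm] at this
    calc ‖u‖ = ‖y - x‖ := by rw [hu, norm_sub_rev]
    _ ≤ ρ := this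
  have hγB : ∀ t ∈ Set.Icc (0:ℝ) 1, γ t ∈ Metric.closedBall x ρ := by
    intro t ht
    have h1 : γ t - x = (1 - t) • (y - x) := by
      simp only [hγ, hu]
      module
    rw [mem_closedBall, dist_eq_norm, h1, norm_smul]
    have h2 : ‖y - x‖ ≤ ρ := by rwa [← dist_eq_norm, dist_comm, ← mem_closedBall]
    have h3 : |1 - t| ≤ 1 := by
      rw [abs_le]; constructor <;> [linarith [ht.2]; linarith [ht.1]]
    calc ‖(1:ℝ) - t‖ * ‖y - x‖ ≤ 1 * ρ := by
          apply mul_le_mul _ h2 (norm_nonneg _) zero_le_one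
          rwa [Real.norm_eq_abs]
    _ = ρ := one_mul ρ
  have hγU : ∀ t ∈ Set.Icc (0:ℝ) 1, γ t ∈ ({0}ᶜ : Set E4) := fun t ht => hB (hγB t ht)
  have hCDAt : ∀ t ∈ Set.Icc (0:ℝ) 1, ContDiffAt ℝ 2 v (γ t) := fun t ht =>
    hv.contDiffAt ((isOpen_compl_singleton).mem_nhds (hγU t ht))
  have hγ' : ∀ t : ℝ, HasDerivAt γ u t := by
    intro t
    have : HasDerivAt (fun s : ℝ => s • u) ((1:ℝ) • u) t := (hasDerivAt_id t).smul_const u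
    simpa [hγ, one_smul] using this.const_add y
  have hg' : ∀ t ∈ Set.Icc (0:ℝ) 1,
      HasDerivAt (fun s => v (γ s)) ((fderiv ℝ v (γ t)) u) t := by
    intro t ht
    have hd : DifferentiableAt ℝ v (γ t) := (hCDAt t ht).differentiableAt (by norm_num)
    exact (hd.hasFDerivAt).comp_hasDerivAt t (hγ' t)
  have hg1' : ∀ t ∈ Set.Icc (0:ℝ) 1,
      HasDerivAt (fun s => (fderiv ℝ v (γ s)) u) ((fderiv ℝ (fderiv ℝ v) (γ t)) u u) t := by
    intro t ht
    have h1 : ContDiffAt ℝ 1 (fderiv ℝ v) (γ t) := by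
      apply (hCDAt t ht).fderiv_right
      norm_num
    have hd : DifferentiableAt ℝ (fderiv ℝ v) (γ t) := h1.differentiableAt one_ne_zero
    have hφ : HasDerivAt (fun s => fderiv ℝ v (γ s)) ((fderiv ℝ (fderiv ℝ v) (γ t)) u) t :=
      (hd.hasFDerivAt).comp_hasDerivAt t (hγ' t)
    simpa using hφ.clm_apply (hasDerivAt_const t u)
  -- the auxiliary function for the Taylor formula
  set F : ℝ → ℝ := fun t => v (γ t) + (1 - t) * ((fderiv ℝ v (γ t)) u) with hF
  have hF' : ∀ t ∈ Set.Icc (0:ℝ) 1,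
      HasDerivAt F ((1 - t) * ((fderiv ℝ (fderiv ℝ v) (γ t)) u u)) t := by
    intro t ht
    have h1 : HasDerivAt (fun s : ℝ => 1 - s) (-1) t := by
      simpa using (hasDerivAt_id t).const_sub 1
    have := (hg' t ht).add (h1.mul (hg1' t ht))
    exact this.congr_deriv (by ring)
  -- continuity of the second derivative term
  have hD2cont : ContinuousOn (fderiv ℝ (fderiv ℝ v)) ({0}ᶜ : Set E4) := by
    have h1 : ContDiffOn ℝ 1 (fderiv ℝ v) ({0}ᶜ : Set E4) :=
      hv.fderiv_of_isOpen isOpen_compl_singleton (by norm_num)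
    exact h1.continuousOn_fderiv_of_isOpen isOpen_compl_singleton le_rfl
  have hγcont : Continuous γ := by
    apply continuous_const.add
    exact (continuous_id.smul continuous_const)
  have hcont2 : ContinuousOn (fun t => (fderiv ℝ (fderiv ℝ v) (γ t)) u u) (Set.Icc (0:ℝ) 1) := by
    have h1 : ContinuousOn (fun t => fderiv ℝ (fderiv ℝ v) (γ t)) (Set.Icc (0:ℝ) 1) :=
      hD2cont.comp hγcont.continuousOn hγU
    exact (h1.clm_apply continuousOn_const).clm_apply continuousOn_const
  have hint : IntervalIntegrable
      (fun t => (1 - t) * ((fderiv ℝ (fderiv ℝ v) (γ t)) u u)) volume 0 1 := by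
    apply ContinuousOn.intervalIntegrable
    rw [Set.uIcc_of_le (by norm_num : (0:ℝ) ≤ 1)]
    exact ((continuous_const.sub continuous_id).continuousOn).mul hcont2
  have hFTC : ∫ t in (0:ℝ)..1, (1 - t) * ((fderiv ℝ (fderiv ℝ v) (γ t)) u u) = F 1 - F 0 := by
    apply intervalIntegral.integral_eq_sub_of_hasDerivAt
    · intro t ht
      rw [Set.uIcc_of_le (by norm_num : (0:ℝ) ≤ 1)] at ht
      exact hF' t ht
    · exact hint
  have hγ1 : γ 1 = x := by simp [hγ, hu]
  have hγ0 : γ 0 = y := by simp [hγ]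
  have hkey : v x = v y + (fderiv ℝ v y) u +
      ∫ t in (0:ℝ)..1, (1 - t) * ((fderiv ℝ (fderiv ℝ v) (γ t)) u u) := by
    rw [hFTC]
    simp only [hF, hγ1, hγ0]
    ring
  -- bound everything
  have habs : |v x| ≤ |v y| + ‖fderiv ℝ v y‖ * ρ +
      |∫ t in (0:ℝ)..1, (1 - t) * ((fderiv ℝ (fderiv ℝ v) (γ t)) u u)| := by
    rw [hkey]
    have h1 : |(fderiv ℝ v y) u| ≤ ‖fderiv ℝ v y‖ * ρ := by
      calc |(fderiv ℝ v y) u| ≤ ‖fderiv ℝ v y‖ * ‖u‖ := (fderiv ℝ v y).le_opNorm u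
      _ ≤ ‖fderiv ℝ v y‖ * ρ := by
          apply mul_le_mul_of_nonneg_left hunorm (norm_nonneg _)
    calc |v y + (fderiv ℝ v y) u + _| ≤ |v y| + |(fderiv ℝ v y) u| + |_| := by
          exact (abs_add_le _ _).trans (add_le_add_left (abs_add_le _ _) _)
    _ ≤ _ := by
          apply add_le_add_left
          exact add_le_add_right h1 _
  refine habs.trans ?_
  apply add_le_add_right
  -- bound the remainder integral
  have hbnd : |∫ t in (0:ℝ)..1, (1 - t) * ((fderiv ℝ (fderiv ℝ v) (γ t)) u u)| ≤
      ρ ^ 2 * ∫ t in (0:ℝ)..1, (1 - t) * ‖fderiv ℝ (fderiv ℝ v) (γ t)‖ := by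
    have h1 := intervalIntegral.abs_integral_le_integral_abs (μ := volume) (f := fun t =>
      (1 - t) * ((fderiv ℝ (fderiv ℝ v) (γ t)) u u)) (by norm_num : (0:ℝ) ≤ 1)
    refine h1.trans ?_
    rw [← intervalIntegral.integral_const_mul]
    apply intervalIntegral.integral_mono_on (by norm_num : (0:ℝ) ≤ 1)
    · exact hint.abs
    · apply ContinuousOn.intervalIntegrable
      rw [Set.uIcc_of_le (by norm_num : (0:ℝ) ≤ 1)]
      apply continuousOn_const.mul
      apply ((continuous_const.sub continuous_id).continuousOn).mul
      exact (ContinuousOn.norm (E := E4 →L[ℝ] E4 →L[ℝ] ℝ) (hD2cont.comp hγcont.continuousOn hγU))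
    · intro t ht
      have h2 : |(1 - t) * ((fderiv ℝ (fderiv ℝ v) (γ t)) u u)| =
          (1 - t) * |((fderiv ℝ (fderiv ℝ v) (γ t)) u u)| := by
        rw [abs_mul, abs_of_nonneg (by linarith [ht.2] : (0:ℝ) ≤ 1 - t)]
      rw [h2]
      have h3 : |((fderiv ℝ (fderiv ℝ v) (γ t)) u u)| ≤
          ‖fderiv ℝ (fderiv ℝ v) (γ t)‖ * ρ ^ 2 := by
        calc |((fderiv ℝ (fderiv ℝ v) (γ t)) u u)| ≤
            ‖(fderiv ℝ (fderiv ℝ v) (γ t)) u‖ * ‖u‖ := ((fderiv ℝ (fderiv ℝ v) (γ t)) u).le_opNorm u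
        _ ≤ (‖fderiv ℝ (fderiv ℝ v) (γ t)‖ * ‖u‖) * ‖u‖ := by
            apply mul_le_mul_of_nonneg_right ((fderiv ℝ (fderiv ℝ v) (γ t)).le_opNorm u)
              (norm_nonneg _)
        _ ≤ ‖fderiv ℝ (fderiv ℝ v) (γ t)‖ * ρ ^ 2 := by
            have h4 : (0:ℝ) ≤ ρ := le_trans (norm_nonneg u) hunorm
            rw [mul_assoc, pow_two]
            apply mul_le_mul_of_nonneg_left _ (by positivity)
            exact mul_le_mul hunorm hunorm (norm_nonneg _) h4
      calc (1 - t) * |((fderiv ℝ (fderiv ℝ v) (γ t)) u u)| ≤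
          (1 - t) * (‖fderiv ℝ (fderiv ℝ v) (γ t)‖ * ρ ^ 2) := by
            apply mul_le_mul_of_nonneg_left h3 (by linarith [ht.2])
      _ = ρ ^ 2 * ((1 - t) * ‖fderiv ℝ (fderiv ℝ v) (γ t)‖) := by ring
  exact hbnd


lemma weight_lower {A ω ρc e : ℝ} (hA : 0 ≤ A) (hρ : 0 < ρc) (hω : ρc ≤ ω) (he : 0 ≤ e) :
    A ≤ ρc ^ (-e) * (A * ω ^ e) := by
  have h1 : ρc ^ e ≤ ω ^ e := Real.rpow_le_rpow hρ.le hω he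
  have h2 : (0:ℝ) < ρc ^ e := Real.rpow_pos_of_pos hρ e
  rw [Real.rpow_neg hρ.le, inv_mul_eq_div, le_div_iff₀ h2]
  calc A * ρc ^ e ≤ A * ω ^ e := mul_le_mul_of_nonneg_left h1 hA
  _ = A * ω ^ e := rfl

lemma weight_upper {A ω c : ℝ} (hA : 0 ≤ A) (hω : 0 < ω) (hc : ω ≤ c) :
    A ≤ c * (A * ω ^ (-1:ℝ)) := by
  rw [Real.rpow_neg_one]
  calc A = (A * ω) * ω⁻¹ := by field_simp
  _ ≤ (A * c) * ω⁻¹ := mul_le_mul_of_nonneg_right (mul_le_mul_of_nonneg_left hc hA)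
      (inv_nonneg.2 hω.le)
  _ = c * (A * ω⁻¹) := by ring

/-- Hölder inequality specialised to `L¹ ≤ L³ ⬝ (vol)^{2/3}`. -/
lemma lintegral_le_L3 {B : Set (EuclideanSpace ℝ (Fin 4))} (f : E4 → ℝ≥0∞)
    (hf : AEMeasurable f (volume.restrict B)) :
    ∫⁻ y in B, f y ≤ (∫⁻ y in B, f y ^ (3:ℝ)) ^ ((1:ℝ)/3) * (volume B) ^ ((2:ℝ)/3) := by
  have hpq : Real.HolderConjugate 3 (3/2) := Real.holderConjugate_iff.mpr ⟨by norm_num, by norm_num⟩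
  have h := ENNReal.lintegral_mul_le_Lp_mul_Lq (volume.restrict B) hpq hf
    (aemeasurable_const (b := (1:ℝ≥0∞)))
  simp only [Pi.mul_apply, mul_one, ENNReal.one_rpow, lintegral_const, one_mul,
    Measure.restrict_apply_univ] at h
  convert h using 3 <;> norm_num


lemma seg_mem_ball {x y : EuclideanSpace ℝ (Fin 4)} {ρ : ℝ} (hy : y ∈ closedBall x ρ)
    {t : ℝ} (ht : t ∈ Set.Icc (0:ℝ) 1) : y + t • (x - y) ∈ closedBall x ρ := by
  have h1 : y + t • (x - y) - x = (1 - t) • (y - x) := by module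
  rw [mem_closedBall, dist_eq_norm, h1, norm_smul]
  have h2 : ‖y - x‖ ≤ ρ := by rwa [← dist_eq_norm, ← mem_closedBall]
  have h3 : ‖(1:ℝ) - t‖ ≤ 1 := by
    rw [Real.norm_eq_abs, abs_le]; constructor <;> [linarith [ht.2]; linarith [ht.1]]
  calc ‖(1:ℝ) - t‖ * ‖y - x‖ ≤ 1 * ρ :=
    mul_le_mul h3 h2 (norm_nonneg _) zero_le_one
  _ = ρ := one_mul ρ

/-- The weighted integrals appearing on the right-hand side. -/
def NI (v : EuclideanSpace ℝ (Fin 4) → ℝ) (j : ℕ) : ℝ≥0∞ :=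
  ∫⁻ y in ({0}ᶜ : Set (EuclideanSpace ℝ (Fin 4))),
    ENNReal.ofReal
      (‖iteratedFDerivWithin ℝ j v ({0}ᶜ : Set (EuclideanSpace ℝ (Fin 4))) y‖ ^ (3 : ℝ) *
        ‖y‖ ^ (3 * (j : ℝ) - 1))

set_option maxHeartbeats 2000000 in
lemma pointwise_bound :
    ∃ D : ℝ≥0∞, D ≠ ⊤ ∧ ∀ (v : EuclideanSpace ℝ (Fin 4) → ℝ),
      ContDiffOn ℝ 2 v ({0}ᶜ : Set (EuclideanSpace ℝ (Fin 4))) →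
      ∀ x : EuclideanSpace ℝ (Fin 4), x ≠ 0 →
      ENNReal.ofReal (|v x| * ‖x‖) ≤
        D * (NI v 0 ^ ((1:ℝ)/3) + NI v 1 ^ ((1:ℝ)/3) + NI v 2 ^ ((1:ℝ)/3)) := by
  classical
  set κ : ℝ≥0∞ := volume (ball (0 : E4) 1) with hκdef
  have hκ0 : κ ≠ 0 := (measure_ball_pos volume 0 one_pos).ne'
  have hκtop : κ ≠ ⊤ := measure_ball_lt_top.ne
  set Θ : ℝ≥0∞ := ∫⁻ t in Set.Ioc (0:ℝ) 1, ENNReal.ofReal ((1 - t) ^ (-(1:ℝ)/3)) with hΘdef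
  have hΘii : IntervalIntegrable (fun t : ℝ => (1 - t) ^ (-(1:ℝ)/3)) volume 0 1 := by
    have h0 : IntervalIntegrable (fun s : ℝ => s ^ (-(1:ℝ)/3)) volume 0 1 :=
      intervalIntegral.intervalIntegrable_rpow' (by norm_num)
    simpa using (h0.comp_sub_left 1).symm
  have hΘtop : Θ ≠ ⊤ := by
    have hio : IntegrableOn (fun t : ℝ => (1 - t) ^ (-(1:ℝ)/3)) (Set.Ioc (0:ℝ) 1) volume := hΘii.1
    have := MeasureTheory.ofReal_integral_eq_lintegral_ofReal hio ?_
    · rw [hΘdef, ← this]; exact ENNReal.ofReal_ne_top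
    · filter_upwards [ae_restrict_mem measurableSet_Ioc] with t ht
      exact Real.rpow_nonneg (by linarith [ht.2]) _
  refine ⟨(ENNReal.ofReal (2 * 3 ^ ((1:ℝ)/3)) + ENNReal.ofReal 2 + ENNReal.ofReal 2 * Θ) *
      κ ^ ((2:ℝ)/3) * κ⁻¹, ?_, ?_⟩
  · apply ENNReal.mul_ne_top
    apply ENNReal.mul_ne_top
    · exact ENNReal.add_ne_top.2 ⟨ENNReal.add_ne_top.2
        ⟨ENNReal.ofReal_ne_top, ENNReal.ofReal_ne_top⟩,
        ENNReal.mul_ne_top ENNReal.ofReal_ne_top hΘtop⟩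
    · exact ENNReal.rpow_ne_top_of_nonneg (by norm_num) hκtop
    · exact ENNReal.inv_ne_top.2 hκ0
  intro v hv x hx
  have hUopen : IsOpen ({0}ᶜ : Set E4) := isOpen_compl_singleton
  set ρ : ℝ := ‖x‖ / 2 with hρdef
  have hxpos : 0 < ‖x‖ := norm_pos_iff.2 hx
  have hρpos : 0 < ρ := half_pos hxpos
  have hBU : closedBall x ρ ⊆ ({0}ᶜ : Set E4) := by
    intro z hz
    have h1 : dist z x ≤ ρ := mem_closedBall.1 hz
    simp only [Set.mem_compl_iff, Set.mem_singleton_iff]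
    intro h0
    rw [h0, dist_comm, dist_zero_right] at h1
    rw [hρdef] at h1
    linarith
  have hmemB : ∀ z ∈ closedBall x ρ, ρ ≤ ‖z‖ ∧ ‖z‖ ≤ 3 * ρ := by
    intro z hz
    have h1 : dist z x ≤ ρ := mem_closedBall.1 hz
    rw [dist_eq_norm] at h1
    have hx2 : ‖x‖ = 2 * ρ := by rw [hρdef]; ring
    constructor
    · have h2 := norm_sub_norm_le x z
      have h3 : ‖x - z‖ = ‖z - x‖ := norm_sub_rev x z
      linarith
    · have h3 : ‖z‖ ≤ ‖z - x‖ + ‖x‖ := by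
        calc ‖z‖ = ‖z - x + x‖ := by rw [sub_add_cancel]
        _ ≤ ‖z - x‖ + ‖x‖ := norm_add_le _ _
      linarith
  have hvolB : volume (closedBall x ρ) = ENNReal.ofReal (ρ ^ (4:ℕ)) * κ := by
    rw [Measure.addHaar_closedBall volume x hρpos.le, finrank_E4, hκdef]
  have hvolB0 : volume (closedBall x ρ) ≠ 0 := (measure_closedBall_pos volume x hρpos).ne'
  have hvolBtop : volume (closedBall x ρ) ≠ ⊤ := measure_closedBall_lt_top.ne
  -- continuity and measurability of the derivatives
  have hvcont : ContinuousOn v ({0}ᶜ : Set E4) := hv.continuousOn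
  have hCD1 : ContDiffOn ℝ 1 (fderiv ℝ v) ({0}ᶜ : Set E4) :=
    hv.fderiv_of_isOpen hUopen (by norm_num)
  have hD2cont : ContinuousOn (fderiv ℝ (fderiv ℝ v)) ({0}ᶜ : Set E4) :=
    hCD1.continuousOn_fderiv_of_isOpen hUopen le_rfl
  have hD1m : Measurable (fun y : E4 => ‖fderiv ℝ v y‖) := (measurable_fderiv ℝ v).norm
  have hD2m : Measurable (fun y : E4 => ‖fderiv ℝ (fderiv ℝ v) y‖) :=
    (measurable_fderiv ℝ (fderiv ℝ v)).norm
  have hvmB : AEMeasurable (fun y : E4 => |v y|) (volume.restrict (closedBall x ρ)) := by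
    have h1 := (hvcont.mono hBU).aemeasurable (μ := volume) measurableSet_closedBall
    simpa [Real.norm_eq_abs] using h1.norm
  -- identification of the iterated derivatives
  have hD1eq : ∀ z ∈ ({0}ᶜ : Set E4), ‖fderiv ℝ v z‖ =
      ‖iteratedFDerivWithin ℝ 1 v ({0}ᶜ : Set E4) z‖ := by
    intro z hz
    rw [iteratedFDerivWithin_of_isOpen 1 hUopen hz, ← norm_iteratedFDeriv_fderiv (n := 0),
      norm_iteratedFDeriv_zero]
  have hD2eq : ∀ z ∈ ({0}ᶜ : Set E4), ‖fderiv ℝ (fderiv ℝ v) z‖ =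
      ‖iteratedFDerivWithin ℝ 2 v ({0}ᶜ : Set E4) z‖ := by
    intro z hz
    rw [iteratedFDerivWithin_of_isOpen 2 hUopen hz, ← norm_iteratedFDeriv_fderiv (n := 1),
      ← norm_iteratedFDeriv_fderiv (n := 0), norm_iteratedFDeriv_zero]
  -- the remainder function
  set R : E4 → ℝ :=
    fun y => ∫ t in (0:ℝ)..1, (1 - t) * ‖fderiv ℝ (fderiv ℝ v) (y + t • (x - y))‖ with hRdef
  have hRnonneg : ∀ y : E4, 0 ≤ R y := by
    intro y
    apply intervalIntegral.integral_nonneg (by norm_num)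
    intro t ht
    have h1 : (0:ℝ) ≤ 1 - t := by linarith [ht.2]
    positivity
  -- Step 2 : integrated Taylor inequality
  have hstep2 : ENNReal.ofReal (|v x|) * volume (closedBall x ρ) ≤
      (∫⁻ y in closedBall x ρ, ENNReal.ofReal (|v y|)) +
      ENNReal.ofReal ρ * (∫⁻ y in closedBall x ρ, ENNReal.ofReal ‖fderiv ℝ v y‖) +
      ENNReal.ofReal (ρ^2) * (∫⁻ y in closedBall x ρ, ENNReal.ofReal (R y)) := by
    have hpt : ∀ y ∈ closedBall x ρ, ENNReal.ofReal (|v x|) ≤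
        ENNReal.ofReal (|v y|) + ENNReal.ofReal ρ * ENNReal.ofReal ‖fderiv ℝ v y‖ +
        ENNReal.ofReal (ρ^2) * ENNReal.ofReal (R y) := by
      intro y hy
      have h1 := taylor_bound (x := x) (y := y) hv hBU hy
      calc ENNReal.ofReal (|v x|) ≤ ENNReal.ofReal (|v y| + ‖fderiv ℝ v y‖ * ρ + ρ^2 * R y) :=
        ENNReal.ofReal_le_ofReal h1
      _ = _ := by
        rw [ENNReal.ofReal_add (by positivity) (mul_nonneg (by positivity) (hRnonneg y)),
          ENNReal.ofReal_add (abs_nonneg _) (by positivity),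
          ENNReal.ofReal_mul (sq_nonneg ρ), mul_comm ‖fderiv ℝ v y‖ ρ,
          ENNReal.ofReal_mul hρpos.le]
    have h2 : ∫⁻ _ in closedBall x ρ, ENNReal.ofReal (|v x|) ∂volume =
        ENNReal.ofReal (|v x|) * volume (closedBall x ρ) := setLIntegral_const _ _
    rw [← h2]
    refine (setLIntegral_mono' measurableSet_closedBall hpt).trans ?_
    have m1 : AEMeasurable (fun y : E4 => ENNReal.ofReal (|v y|))
        (volume.restrict (closedBall x ρ)) := hvmB.ennreal_ofReal
    have m2 : AEMeasurable (fun y : E4 => ENNReal.ofReal ρ * ENNReal.ofReal ‖fderiv ℝ v y‖)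
        (volume.restrict (closedBall x ρ)) :=
      (hD1m.ennreal_ofReal.const_mul _).aemeasurable
    rw [lintegral_add_left' (f := fun y => ENNReal.ofReal (|v y|) + ENNReal.ofReal ρ * ENNReal.ofReal ‖fderiv ℝ v y‖) (m1.add m2) _, lintegral_add_left' m1 _,
      lintegral_const_mul' _ _ ENNReal.ofReal_ne_top,
      lintegral_const_mul' _ _ ENNReal.ofReal_ne_top]
  -- Estimate A (the j = 0 term)
  have hestA : ∫⁻ y in closedBall x ρ, ENNReal.ofReal (|v y|) ≤
      (ENNReal.ofReal (3*ρ) * NI v 0) ^ ((1:ℝ)/3) *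
        (volume (closedBall x ρ)) ^ ((2:ℝ)/3) := by
    refine (lintegral_le_L3 _ hvmB.ennreal_ofReal).trans ?_
    apply mul_le_mul_left
    apply ENNReal.rpow_le_rpow _ (by norm_num)
    have hpt : ∀ y ∈ closedBall x ρ, (ENNReal.ofReal (|v y|)) ^ (3:ℝ) ≤
        ENNReal.ofReal (3*ρ) * ENNReal.ofReal (|v y| ^ (3:ℝ) * ‖y‖ ^ (-1:ℝ)) := by
      intro y hy
      rw [ENNReal.ofReal_rpow_of_nonneg (abs_nonneg _) (by norm_num),
        ← ENNReal.ofReal_mul (by positivity)]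
      apply ENNReal.ofReal_le_ofReal
      have h3 := hmemB y hy
      have h0y : 0 < ‖y‖ := lt_of_lt_of_le hρpos h3.1
      exact weight_upper (Real.rpow_nonneg (abs_nonneg (v y)) 3) h0y h3.2
    refine (setLIntegral_mono' measurableSet_closedBall hpt).trans ?_
    rw [lintegral_const_mul' _ _ ENNReal.ofReal_ne_top]
    apply mul_le_mul_right
    have heq : ∫⁻ y in closedBall x ρ, ENNReal.ofReal (|v y| ^ (3:ℝ) * ‖y‖ ^ (-1:ℝ)) =
        ∫⁻ y in closedBall x ρ, ENNReal.ofReal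
          (‖iteratedFDerivWithin ℝ 0 v ({0}ᶜ : Set E4) y‖ ^ (3:ℝ) * ‖y‖ ^ (3*((0:ℕ):ℝ)-1)) := by
      apply setLIntegral_congr_fun measurableSet_closedBall
      intro y _
      dsimp only
      rw [norm_iteratedFDerivWithin_zero, Real.norm_eq_abs]
      norm_num
    rw [heq, NI]
    exact lintegral_mono' (Measure.restrict_mono hBU le_rfl) le_rfl
  -- Estimate B (the j = 1 term)
  have hD1mB : AEMeasurable (fun y : E4 => ENNReal.ofReal ‖fderiv ℝ v y‖)
      (volume.restrict (closedBall x ρ)) := hD1m.ennreal_ofReal.aemeasurable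
  have hestB : ∫⁻ y in closedBall x ρ, ENNReal.ofReal ‖fderiv ℝ v y‖ ≤
      (ENNReal.ofReal (ρ ^ (-(2:ℝ))) * NI v 1) ^ ((1:ℝ)/3) *
        (volume (closedBall x ρ)) ^ ((2:ℝ)/3) := by
    refine (lintegral_le_L3 _ hD1mB).trans ?_
    apply mul_le_mul_left
    apply ENNReal.rpow_le_rpow _ (by norm_num)
    have hpt : ∀ y ∈ closedBall x ρ, (ENNReal.ofReal ‖fderiv ℝ v y‖) ^ (3:ℝ) ≤
        ENNReal.ofReal (ρ ^ (-(2:ℝ))) * ENNReal.ofReal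
          (‖iteratedFDerivWithin ℝ 1 v ({0}ᶜ : Set E4) y‖ ^ (3:ℝ) * ‖y‖ ^ (3*((1:ℕ):ℝ)-1)) := by
      intro y hy
      rw [ENNReal.ofReal_rpow_of_nonneg (norm_nonneg _) (by norm_num),
        ← ENNReal.ofReal_mul (Real.rpow_nonneg hρpos.le _), ← hD1eq y (hBU hy)]
      apply ENNReal.ofReal_le_ofReal
      have h2 : (3*((1:ℕ):ℝ)-1) = 2 := by norm_num
      rw [h2]
      exact weight_lower (Real.rpow_nonneg (norm_nonneg _) _) hρpos (hmemB y hy).1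
        (by norm_num)
    refine (setLIntegral_mono' measurableSet_closedBall hpt).trans ?_
    rw [lintegral_const_mul' _ _ ENNReal.ofReal_ne_top]
    apply mul_le_mul_right
    rw [NI]
    exact lintegral_mono' (Measure.restrict_mono hBU le_rfl) le_rfl
  -- Estimate C (the j = 2 term): preliminaries
  have hRof : ∀ y ∈ closedBall x ρ, ENNReal.ofReal (R y) =
      ∫⁻ t in Set.Ioc (0:ℝ) 1,
        ENNReal.ofReal ((1 - t) * ‖fderiv ℝ (fderiv ℝ v) (y + t • (x - y))‖) := by
    intro y hy
    have hcont : ContinuousOn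
        (fun t : ℝ => (1 - t) * ‖fderiv ℝ (fderiv ℝ v) (y + t • (x - y))‖)
        (Set.Icc 0 1) := by
      apply ((continuous_const.sub continuous_id).continuousOn).mul
      refine ContinuousOn.norm (E := E4 →L[ℝ] E4 →L[ℝ] ℝ) ?_
      apply hD2cont.comp
      · exact (continuous_const.add (continuous_id.smul continuous_const)).continuousOn
      · intro t ht
        exact hBU (seg_mem_ball hy ht)
    have hInt : IntegrableOn
        (fun t : ℝ => (1 - t) * ‖fderiv ℝ (fderiv ℝ v) (y + t • (x - y))‖)
        (Set.Ioc 0 1) volume :=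
      (hcont.integrableOn_Icc).mono_set Set.Ioc_subset_Icc_self
    have h1 : R y = ∫ t in Set.Ioc (0:ℝ) 1,
        (1 - t) * ‖fderiv ℝ (fderiv ℝ v) (y + t • (x - y))‖ := by
      rw [hRdef]
      exact intervalIntegral.integral_of_le (by norm_num)
    rw [h1]
    apply MeasureTheory.ofReal_integral_eq_lintegral_ofReal hInt
    filter_upwards [ae_restrict_mem measurableSet_Ioc] with t ht
    exact mul_nonneg (by linarith [ht.2]) (by positivity)
  have hswap : ∫⁻ y in closedBall x ρ, ENNReal.ofReal (R y) =
      ∫⁻ t in Set.Ioc (0:ℝ) 1, ∫⁻ y in closedBall x ρ,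
        ENNReal.ofReal ((1 - t) * ‖fderiv ℝ (fderiv ℝ v) (y + t • (x - y))‖) := by
    rw [setLIntegral_congr_fun measurableSet_closedBall
      hRof]
    apply lintegral_lintegral_swap
    apply Measurable.aemeasurable
    apply Measurable.ennreal_ofReal
    apply Measurable.mul
    · exact measurable_const.sub measurable_snd
    · refine Measurable.norm (α := E4 →L[ℝ] E4 →L[ℝ] ℝ) ?_
      apply (measurable_fderiv ℝ (fderiv ℝ v)).comp
      have hφ : Continuous (fun p : E4 × ℝ => p.1 + p.2 • (x - p.1)) := by
        apply continuous_fst.add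
        exact continuous_snd.smul (continuous_const.sub continuous_fst)
      exact hφ.measurable
  -- the inner L³ bound for the second derivative
  have hI2B : ∫⁻ z in closedBall x ρ, ENNReal.ofReal (‖fderiv ℝ (fderiv ℝ v) z‖ ^ (3:ℝ)) ≤
      ENNReal.ofReal (ρ ^ (-(5:ℝ))) * NI v 2 := by
    have hpt : ∀ z ∈ closedBall x ρ,
        ENNReal.ofReal (‖fderiv ℝ (fderiv ℝ v) z‖ ^ (3:ℝ)) ≤
        ENNReal.ofReal (ρ ^ (-(5:ℝ))) * ENNReal.ofReal
          (‖iteratedFDerivWithin ℝ 2 v ({0}ᶜ : Set E4) z‖ ^ (3:ℝ) * ‖z‖ ^ (3*((2:ℕ):ℝ)-1)) := by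
      intro z hz
      rw [← ENNReal.ofReal_mul (Real.rpow_nonneg hρpos.le _), ← hD2eq z (hBU hz)]
      apply ENNReal.ofReal_le_ofReal
      have h5 : (3*((2:ℕ):ℝ)-1) = 5 := by norm_num
      rw [h5]
      exact weight_lower (by positivity) hρpos (hmemB z hz).1
        (by norm_num)
    refine (setLIntegral_mono' measurableSet_closedBall hpt).trans ?_
    rw [lintegral_const_mul' _ _ ENNReal.ofReal_ne_top]
    apply mul_le_mul_right
    rw [NI]
    exact lintegral_mono' (Measure.restrict_mono hBU le_rfl) le_rfl
  have hGmes : Measurable (Set.indicator (closedBall x ρ)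
      (fun z : E4 => ENNReal.ofReal (‖fderiv ℝ (fderiv ℝ v) z‖ ^ (3:ℝ)))) := by
    apply Measurable.indicator _ measurableSet_closedBall
    have : Measurable fun z : E4 => ‖fderiv ℝ (fderiv ℝ v) z‖ ^ (3:ℝ) := by fun_prop
    exact this.ennreal_ofReal
  -- the per-t bound
  have hJt : ∀ t ∈ Set.Ioc (0:ℝ) 1,
      (∫⁻ y in closedBall x ρ,
        ENNReal.ofReal ((1 - t) * ‖fderiv ℝ (fderiv ℝ v) (y + t • (x - y))‖)) ≤
      ENNReal.ofReal ((1 - t) ^ (-(1:ℝ)/3)) *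
        ((ENNReal.ofReal (ρ ^ (-(5:ℝ))) * NI v 2) ^ ((1:ℝ)/3) *
          (volume (closedBall x ρ)) ^ ((2:ℝ)/3)) := by
    intro t ht
    rcases eq_or_lt_of_le ht.2 with h1 | h1
    · rw [← h1]
      simp
    · have hspos : (0:ℝ) < 1 - t := by linarith
      have hsplit : ∀ y : E4,
          ENNReal.ofReal ((1 - t) * ‖fderiv ℝ (fderiv ℝ v) (y + t • (x - y))‖)
          = ENNReal.ofReal (1 - t) *
            ENNReal.ofReal ‖fderiv ℝ (fderiv ℝ v) (y + t • (x - y))‖ := fun y =>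
        ENNReal.ofReal_mul hspos.le
      simp only [hsplit]
      rw [lintegral_const_mul' _ _ ENNReal.ofReal_ne_top]
      have hm : AEMeasurable
          (fun y : E4 => ENNReal.ofReal ‖fderiv ℝ (fderiv ℝ v) (y + t • (x - y))‖)
          (volume.restrict (closedBall x ρ)) := by
        apply Measurable.aemeasurable
        apply Measurable.ennreal_ofReal
        refine Measurable.norm (α := E4 →L[ℝ] E4 →L[ℝ] ℝ) ?_
        apply (measurable_fderiv ℝ (fderiv ℝ v)).comp
        exact Continuous.measurable (by fun_prop)
      refine le_trans (mul_le_mul_right (lintegral_le_L3 _ hm) _) ?_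
      -- change of variables
      have hCoV : (∫⁻ y in closedBall x ρ,
          (ENNReal.ofReal ‖fderiv ℝ (fderiv ℝ v) (y + t • (x - y))‖) ^ (3:ℝ)) ≤
          ENNReal.ofReal (((1 - t)^(4:ℕ))⁻¹) *
            ∫⁻ z in closedBall x ρ, ENNReal.ofReal (‖fderiv ℝ (fderiv ℝ v) z‖ ^ (3:ℝ)) := by
        set G := Set.indicator (closedBall x ρ)
            (fun z : E4 => ENNReal.ofReal (‖fderiv ℝ (fderiv ℝ v) z‖ ^ (3:ℝ))) with hGdef
        have hpt : ∀ y ∈ closedBall x ρ,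
            (ENNReal.ofReal ‖fderiv ℝ (fderiv ℝ v) (y + t • (x - y))‖) ^ (3:ℝ) ≤
            G (y + t • (x - y)) := by
          intro y hy
          have hmem : y + t • (x - y) ∈ closedBall x ρ :=
            seg_mem_ball hy ⟨ht.1.le, ht.2⟩
          rw [hGdef, Set.indicator_of_mem hmem,
            ENNReal.ofReal_rpow_of_nonneg (norm_nonneg (fderiv ℝ (fderiv ℝ v) (y + t • (x - y)))) (by norm_num)]
        refine (setLIntegral_mono' measurableSet_closedBall hpt).trans ?_
        refine (setLIntegral_le_lintegral _ _).trans ?_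
        have haff : ∀ y : E4, y + t • (x - y) = (1 - t) • y + t • x := by
          intro y; module
        simp only [haff]
        rw [lintegral_comp_affine G hGmes hspos.ne' (t • x), hGdef,
          lintegral_indicator measurableSet_closedBall _]
        apply mul_le_mul_left
        apply le_of_eq
        congr 1
        rw [abs_of_nonneg (inv_nonneg.2 (pow_nonneg hspos.le _))]
      refine le_trans (mul_le_mul_right (mul_le_mul_left
        (ENNReal.rpow_le_rpow hCoV (by norm_num)) _) _) ?_
      refine le_trans (mul_le_mul_right (mul_le_mul_left (ENNReal.rpow_le_rpow
        (mul_le_mul_right hI2B _) (by norm_num)) _) _) ?_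
      -- now pure algebra
      apply le_of_eq
      rw [ENNReal.mul_rpow_of_nonneg _ _ (by norm_num : (0:ℝ) ≤ 1/3),
        ENNReal.ofReal_rpow_of_nonneg (by positivity) (by norm_num : (0:ℝ) ≤ 1/3)]
      have hs3 : ENNReal.ofReal (1 - t) *
          ENNReal.ofReal ((((1 - t)^(4:ℕ))⁻¹) ^ ((1:ℝ)/3)) =
          ENNReal.ofReal ((1 - t) ^ (-(1:ℝ)/3)) := by
        rw [← ENNReal.ofReal_mul hspos.le]
        congr 1
        rw [← Real.rpow_natCast (1 - t) 4, ← Real.rpow_neg hspos.le,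
          ← Real.rpow_mul hspos.le]
        nth_rewrite 1 [← Real.rpow_one (1 - t)]
        rw [← Real.rpow_add hspos]
        norm_num
      calc ENNReal.ofReal (1 - t) *
          (ENNReal.ofReal ((((1 - t)^(4:ℕ))⁻¹) ^ ((1:ℝ)/3)) *
            (ENNReal.ofReal (ρ ^ (-(5:ℝ))) * NI v 2) ^ ((1:ℝ)/3) *
            (volume (closedBall x ρ)) ^ ((2:ℝ)/3))
          = (ENNReal.ofReal (1 - t) *
              ENNReal.ofReal ((((1 - t)^(4:ℕ))⁻¹) ^ ((1:ℝ)/3))) *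
            ((ENNReal.ofReal (ρ ^ (-(5:ℝ))) * NI v 2) ^ ((1:ℝ)/3) *
              (volume (closedBall x ρ)) ^ ((2:ℝ)/3)) := by ring
      _ = _ := by rw [hs3]
  -- Estimate C
  have hestC : ∫⁻ y in closedBall x ρ, ENNReal.ofReal (R y) ≤
      Θ * ((ENNReal.ofReal (ρ ^ (-(5:ℝ))) * NI v 2) ^ ((1:ℝ)/3) *
        (volume (closedBall x ρ)) ^ ((2:ℝ)/3)) := by
    rw [hswap]
    refine (setLIntegral_mono' measurableSet_Ioc hJt).trans ?_
    have hmθ : AEMeasurable (fun t : ℝ => ENNReal.ofReal ((1 - t) ^ (-(1:ℝ)/3)))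
        (volume.restrict (Set.Ioc (0:ℝ) 1)) := by
      apply Measurable.aemeasurable
      have : Measurable fun t : ℝ => (1 - t) ^ (-(1:ℝ)/3) := by fun_prop
      exact this.ennreal_ofReal
    rw [lintegral_mul_const'' _ hmθ]
  -- final assembly
  set Sc : ℝ≥0∞ := ENNReal.ofReal (2 * 3 ^ ((1:ℝ)/3)) + ENNReal.ofReal 2 + ENNReal.ofReal 2 * Θ
    with hScdef
  have hsc0 : ENNReal.ofReal (2 * 3 ^ ((1:ℝ)/3)) ≤ Sc := by
    rw [hScdef]; exact le_trans le_self_add le_self_add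
  have hsc1 : ENNReal.ofReal 2 ≤ Sc := by
    rw [hScdef]; exact le_trans le_add_self le_self_add
  have hsc2 : ENNReal.ofReal 2 * Θ ≤ Sc := by rw [hScdef]; exact le_add_self
  have hkey : ∀ (c N : ℝ≥0∞), c ≤ Sc →
      c * κ ^ ((2:ℝ)/3) * ENNReal.ofReal (ρ ^ (4:ℕ)) * N ≤
        (Sc * κ ^ ((2:ℝ)/3) * κ⁻¹) * N * volume (closedBall x ρ) := by
    intro c N hc
    rw [hvolB]
    have h1 : κ⁻¹ * κ = 1 := ENNReal.inv_mul_cancel hκ0 hκtop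
    calc c * κ ^ ((2:ℝ)/3) * ENNReal.ofReal (ρ ^ (4:ℕ)) * N
        ≤ Sc * κ ^ ((2:ℝ)/3) * ENNReal.ofReal (ρ ^ (4:ℕ)) * N :=
          mul_le_mul_left (mul_le_mul_left (mul_le_mul_left hc _) _) _
    _ = Sc * κ ^ ((2:ℝ)/3) * ENNReal.ofReal (ρ ^ (4:ℕ)) * N * (κ⁻¹ * κ) := by
          rw [h1, mul_one]
    _ = (Sc * κ ^ ((2:ℝ)/3) * κ⁻¹) * N * (ENNReal.ofReal (ρ ^ (4:ℕ)) * κ) := by ring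
  have hx2 : ‖x‖ = 2 * ρ := by rw [hρdef]; ring
  have hvol23 : (volume (closedBall x ρ)) ^ ((2:ℝ)/3) =
      ENNReal.ofReal ((ρ ^ (4:ℕ)) ^ ((2:ℝ)/3)) * κ ^ ((2:ℝ)/3) := by
    rw [hvolB, ENNReal.mul_rpow_of_nonneg _ _ (by norm_num : (0:ℝ) ≤ 2/3),
      ENNReal.ofReal_rpow_of_nonneg (by positivity) (by norm_num : (0:ℝ) ≤ 2/3)]
  -- real scalar identities
  have e2 : ((ρ^(4:ℕ)) : ℝ) ^ ((2:ℝ)/3) = ρ ^ ((8:ℝ)/3) := by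
    rw [← Real.rpow_natCast ρ 4, ← Real.rpow_mul hρpos.le]; norm_num
  have real0 : 2*ρ*((3*ρ) ^ ((1:ℝ)/3))*((ρ^(4:ℕ)) ^ ((2:ℝ)/3)) =
      2 * 3 ^ ((1:ℝ)/3) * ρ^(4:ℕ) := by
    have h13 : ρ ^ ((1:ℝ)/3) * ρ ^ ((8:ℝ)/3) = ρ^(3:ℕ) := by
      rw [← Real.rpow_add hρpos, ← Real.rpow_natCast ρ 3]; norm_num
    calc 2*ρ*((3*ρ) ^ ((1:ℝ)/3))*((ρ^(4:ℕ)) ^ ((2:ℝ)/3))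
        = 2*ρ*(3 ^ ((1:ℝ)/3) * ρ ^ ((1:ℝ)/3))*(ρ ^ ((8:ℝ)/3)) := by
          rw [Real.mul_rpow (by norm_num) hρpos.le, e2]
    _ = 2 * 3 ^ ((1:ℝ)/3) * (ρ * (ρ ^ ((1:ℝ)/3) * ρ ^ ((8:ℝ)/3))) := by ring
    _ = 2 * 3 ^ ((1:ℝ)/3) * (ρ * ρ^(3:ℕ)) := by rw [h13]
    _ = 2 * 3 ^ ((1:ℝ)/3) * ρ^(4:ℕ) := by ring
  have real1 : 2*ρ*ρ*((ρ ^ (-(2:ℝ))) ^ ((1:ℝ)/3))*((ρ^(4:ℕ)) ^ ((2:ℝ)/3)) = 2 * ρ^(4:ℕ) := by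
    have hm : (ρ ^ (-(2:ℝ))) ^ ((1:ℝ)/3) * ((ρ^(4:ℕ)) ^ ((2:ℝ)/3)) = ρ^(2:ℕ) := by
      rw [e2, ← Real.rpow_mul hρpos.le, ← Real.rpow_add hρpos, ← Real.rpow_natCast ρ 2]
      norm_num
    calc 2*ρ*ρ*((ρ ^ (-(2:ℝ))) ^ ((1:ℝ)/3))*((ρ^(4:ℕ)) ^ ((2:ℝ)/3))
        = 2*(ρ*ρ)*((ρ ^ (-(2:ℝ))) ^ ((1:ℝ)/3) * ((ρ^(4:ℕ)) ^ ((2:ℝ)/3))) := by ring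
    _ = 2*(ρ*ρ)*ρ^(2:ℕ) := by rw [hm]
    _ = 2 * ρ^(4:ℕ) := by ring
  have real2 : 2*ρ*ρ^(2:ℕ)*((ρ ^ (-(5:ℝ))) ^ ((1:ℝ)/3))*((ρ^(4:ℕ)) ^ ((2:ℝ)/3)) = 2 * ρ^(4:ℕ) := by
    have hm : (ρ ^ (-(5:ℝ))) ^ ((1:ℝ)/3) * ((ρ^(4:ℕ)) ^ ((2:ℝ)/3)) = ρ := by
      rw [e2, ← Real.rpow_mul hρpos.le, ← Real.rpow_add hρpos]
      norm_num
    calc 2*ρ*ρ^(2:ℕ)*((ρ ^ (-(5:ℝ))) ^ ((1:ℝ)/3))*((ρ^(4:ℕ)) ^ ((2:ℝ)/3))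
        = 2*(ρ^(2:ℕ))*((ρ ^ (-(5:ℝ))) ^ ((1:ℝ)/3) * ((ρ^(4:ℕ)) ^ ((2:ℝ)/3)))*ρ := by ring
    _ = 2*(ρ^(2:ℕ))*ρ*ρ := by rw [hm]
    _ = 2 * ρ^(4:ℕ) := by ring
  -- the three term bounds
  have hterm0 : ENNReal.ofReal ‖x‖ *
      ((ENNReal.ofReal (3*ρ) * NI v 0) ^ ((1:ℝ)/3) *
        (volume (closedBall x ρ)) ^ ((2:ℝ)/3)) ≤
      (Sc * κ ^ ((2:ℝ)/3) * κ⁻¹) * NI v 0 ^ ((1:ℝ)/3) * volume (closedBall x ρ) := by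
    refine le_trans (le_of_eq ?_) (hkey _ (NI v 0 ^ ((1:ℝ)/3)) hsc0)
    calc ENNReal.ofReal ‖x‖ * ((ENNReal.ofReal (3*ρ) * NI v 0) ^ ((1:ℝ)/3) *
          (volume (closedBall x ρ)) ^ ((2:ℝ)/3))
        = ENNReal.ofReal (2*ρ) * ((ENNReal.ofReal ((3*ρ) ^ ((1:ℝ)/3)) * NI v 0 ^ ((1:ℝ)/3)) *
            (ENNReal.ofReal ((ρ^(4:ℕ)) ^ ((2:ℝ)/3)) * κ ^ ((2:ℝ)/3))) := by
          rw [hx2, hvol23, ENNReal.mul_rpow_of_nonneg _ _ (by norm_num : (0:ℝ) ≤ 1/3),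
            ENNReal.ofReal_rpow_of_nonneg (by positivity) (by norm_num : (0:ℝ) ≤ 1/3)]
    _ = ENNReal.ofReal (2*ρ) * ENNReal.ofReal ((3*ρ) ^ ((1:ℝ)/3)) *
          ENNReal.ofReal ((ρ^(4:ℕ)) ^ ((2:ℝ)/3)) * κ ^ ((2:ℝ)/3) * NI v 0 ^ ((1:ℝ)/3) := by
          ring
    _ = ENNReal.ofReal (2*ρ*((3*ρ) ^ ((1:ℝ)/3))*((ρ^(4:ℕ)) ^ ((2:ℝ)/3))) * κ ^ ((2:ℝ)/3) *
          NI v 0 ^ ((1:ℝ)/3) := by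
          rw [← ENNReal.ofReal_mul (p := 2*ρ) (by positivity),
            ← ENNReal.ofReal_mul (p := 2*ρ*((3*ρ) ^ ((1:ℝ)/3))) (by positivity)]
    _ = ENNReal.ofReal (2 * 3 ^ ((1:ℝ)/3) * ρ^(4:ℕ)) * κ ^ ((2:ℝ)/3) * NI v 0 ^ ((1:ℝ)/3) := by
          rw [real0]
    _ = ENNReal.ofReal (2 * 3 ^ ((1:ℝ)/3)) * κ ^ ((2:ℝ)/3) * ENNReal.ofReal (ρ^(4:ℕ)) *
          NI v 0 ^ ((1:ℝ)/3) := by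
          rw [ENNReal.ofReal_mul (p := 2 * 3 ^ ((1:ℝ)/3)) (by positivity)]; ring
  have hterm1 : ENNReal.ofReal ‖x‖ * (ENNReal.ofReal ρ *
      ((ENNReal.ofReal (ρ ^ (-(2:ℝ))) * NI v 1) ^ ((1:ℝ)/3) *
        (volume (closedBall x ρ)) ^ ((2:ℝ)/3))) ≤
      (Sc * κ ^ ((2:ℝ)/3) * κ⁻¹) * NI v 1 ^ ((1:ℝ)/3) * volume (closedBall x ρ) := by
    refine le_trans (le_of_eq ?_) (hkey _ (NI v 1 ^ ((1:ℝ)/3)) hsc1)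
    calc ENNReal.ofReal ‖x‖ * (ENNReal.ofReal ρ *
          ((ENNReal.ofReal (ρ ^ (-(2:ℝ))) * NI v 1) ^ ((1:ℝ)/3) *
            (volume (closedBall x ρ)) ^ ((2:ℝ)/3)))
        = ENNReal.ofReal (2*ρ) * (ENNReal.ofReal ρ *
            ((ENNReal.ofReal ((ρ ^ (-(2:ℝ))) ^ ((1:ℝ)/3)) * NI v 1 ^ ((1:ℝ)/3)) *
              (ENNReal.ofReal ((ρ^(4:ℕ)) ^ ((2:ℝ)/3)) * κ ^ ((2:ℝ)/3)))) := by
          rw [hx2, hvol23, ENNReal.mul_rpow_of_nonneg _ _ (by norm_num : (0:ℝ) ≤ 1/3),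
            ENNReal.ofReal_rpow_of_nonneg (Real.rpow_nonneg hρpos.le _)
              (by norm_num : (0:ℝ) ≤ 1/3)]
    _ = ENNReal.ofReal (2*ρ) * ENNReal.ofReal ρ * ENNReal.ofReal ((ρ ^ (-(2:ℝ))) ^ ((1:ℝ)/3)) *
          ENNReal.ofReal ((ρ^(4:ℕ)) ^ ((2:ℝ)/3)) * κ ^ ((2:ℝ)/3) * NI v 1 ^ ((1:ℝ)/3) := by
          ring
    _ = ENNReal.ofReal (2*ρ*ρ*((ρ ^ (-(2:ℝ))) ^ ((1:ℝ)/3))*((ρ^(4:ℕ)) ^ ((2:ℝ)/3))) *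
          κ ^ ((2:ℝ)/3) * NI v 1 ^ ((1:ℝ)/3) := by
          rw [← ENNReal.ofReal_mul (p := 2*ρ) (by positivity),
            ← ENNReal.ofReal_mul (p := 2*ρ*ρ) (by positivity),
            ← ENNReal.ofReal_mul (p := 2*ρ*ρ*((ρ ^ (-(2:ℝ))) ^ ((1:ℝ)/3))) (by positivity)]
    _ = ENNReal.ofReal (2 * ρ^(4:ℕ)) * κ ^ ((2:ℝ)/3) * NI v 1 ^ ((1:ℝ)/3) := by rw [real1]
    _ = ENNReal.ofReal 2 * κ ^ ((2:ℝ)/3) * ENNReal.ofReal (ρ^(4:ℕ)) *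
          NI v 1 ^ ((1:ℝ)/3) := by
          rw [ENNReal.ofReal_mul (p := (2:ℝ)) (by norm_num)]; ring
  have hterm2 : ENNReal.ofReal ‖x‖ * (ENNReal.ofReal (ρ^2) *
      (Θ * ((ENNReal.ofReal (ρ ^ (-(5:ℝ))) * NI v 2) ^ ((1:ℝ)/3) *
        (volume (closedBall x ρ)) ^ ((2:ℝ)/3)))) ≤
      (Sc * κ ^ ((2:ℝ)/3) * κ⁻¹) * NI v 2 ^ ((1:ℝ)/3) * volume (closedBall x ρ) := by
    refine le_trans (le_of_eq ?_) (hkey _ (NI v 2 ^ ((1:ℝ)/3)) hsc2)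
    calc ENNReal.ofReal ‖x‖ * (ENNReal.ofReal (ρ^2) *
          (Θ * ((ENNReal.ofReal (ρ ^ (-(5:ℝ))) * NI v 2) ^ ((1:ℝ)/3) *
            (volume (closedBall x ρ)) ^ ((2:ℝ)/3))))
        = ENNReal.ofReal (2*ρ) * (ENNReal.ofReal (ρ^2) *
            (Θ * ((ENNReal.ofReal ((ρ ^ (-(5:ℝ))) ^ ((1:ℝ)/3)) * NI v 2 ^ ((1:ℝ)/3)) *
              (ENNReal.ofReal ((ρ^(4:ℕ)) ^ ((2:ℝ)/3)) * κ ^ ((2:ℝ)/3))))) := by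
          rw [hx2, hvol23, ENNReal.mul_rpow_of_nonneg _ _ (by norm_num : (0:ℝ) ≤ 1/3),
            ENNReal.ofReal_rpow_of_nonneg (Real.rpow_nonneg hρpos.le _)
              (by norm_num : (0:ℝ) ≤ 1/3)]
    _ = ENNReal.ofReal (2*ρ) * ENNReal.ofReal (ρ^2) * ENNReal.ofReal ((ρ ^ (-(5:ℝ))) ^ ((1:ℝ)/3)) *
          ENNReal.ofReal ((ρ^(4:ℕ)) ^ ((2:ℝ)/3)) * Θ * κ ^ ((2:ℝ)/3) * NI v 2 ^ ((1:ℝ)/3) := by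
          ring
    _ = ENNReal.ofReal (2*ρ*ρ^(2:ℕ)*((ρ ^ (-(5:ℝ))) ^ ((1:ℝ)/3))*((ρ^(4:ℕ)) ^ ((2:ℝ)/3))) *
          Θ * κ ^ ((2:ℝ)/3) * NI v 2 ^ ((1:ℝ)/3) := by
          rw [← ENNReal.ofReal_mul (p := 2*ρ) (by positivity),
            ← ENNReal.ofReal_mul (p := 2*ρ*ρ^(2:ℕ)) (by positivity),
            ← ENNReal.ofReal_mul (p := 2*ρ*ρ^(2:ℕ)*((ρ ^ (-(5:ℝ))) ^ ((1:ℝ)/3))) (by positivity)]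
    _ = ENNReal.ofReal (2 * ρ^(4:ℕ)) * Θ * κ ^ ((2:ℝ)/3) * NI v 2 ^ ((1:ℝ)/3) := by rw [real2]
    _ = (ENNReal.ofReal 2 * Θ) * κ ^ ((2:ℝ)/3) * ENNReal.ofReal (ρ^(4:ℕ)) *
          NI v 2 ^ ((1:ℝ)/3) := by
          rw [ENNReal.ofReal_mul (p := (2:ℝ)) (by norm_num)]; ring
  -- conclude
  rw [← ENNReal.mul_le_mul_iff_left hvolB0 hvolBtop]
  calc ENNReal.ofReal (|v x| * ‖x‖) * volume (closedBall x ρ)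
      = ENNReal.ofReal ‖x‖ * (ENNReal.ofReal (|v x|) * volume (closedBall x ρ)) := by
        rw [ENNReal.ofReal_mul (abs_nonneg _)]; ring
  _ ≤ ENNReal.ofReal ‖x‖ * (((∫⁻ y in closedBall x ρ, ENNReal.ofReal (|v y|)) +
        ENNReal.ofReal ρ * (∫⁻ y in closedBall x ρ, ENNReal.ofReal ‖fderiv ℝ v y‖)) +
        ENNReal.ofReal (ρ^2) * (∫⁻ y in closedBall x ρ, ENNReal.ofReal (R y))) :=
        mul_le_mul_right hstep2 _
  _ ≤ ENNReal.ofReal ‖x‖ * ((((ENNReal.ofReal (3*ρ) * NI v 0) ^ ((1:ℝ)/3) *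
          (volume (closedBall x ρ)) ^ ((2:ℝ)/3)) +
        ENNReal.ofReal ρ * ((ENNReal.ofReal (ρ ^ (-(2:ℝ))) * NI v 1) ^ ((1:ℝ)/3) *
          (volume (closedBall x ρ)) ^ ((2:ℝ)/3))) +
        ENNReal.ofReal (ρ^2) * (Θ * ((ENNReal.ofReal (ρ ^ (-(5:ℝ))) * NI v 2) ^ ((1:ℝ)/3) *
          (volume (closedBall x ρ)) ^ ((2:ℝ)/3)))) := by
        apply mul_le_mul_right
        exact add_le_add (add_le_add hestA (mul_le_mul_right hestB _))
          (mul_le_mul_right hestC _)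
  _ = ENNReal.ofReal ‖x‖ * ((ENNReal.ofReal (3*ρ) * NI v 0) ^ ((1:ℝ)/3) *
          (volume (closedBall x ρ)) ^ ((2:ℝ)/3)) +
      ENNReal.ofReal ‖x‖ * (ENNReal.ofReal ρ *
          ((ENNReal.ofReal (ρ ^ (-(2:ℝ))) * NI v 1) ^ ((1:ℝ)/3) *
            (volume (closedBall x ρ)) ^ ((2:ℝ)/3))) +
      ENNReal.ofReal ‖x‖ * (ENNReal.ofReal (ρ^2) *
          (Θ * ((ENNReal.ofReal (ρ ^ (-(5:ℝ))) * NI v 2) ^ ((1:ℝ)/3) *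
            (volume (closedBall x ρ)) ^ ((2:ℝ)/3)))) := by ring
  _ ≤ (Sc * κ ^ ((2:ℝ)/3) * κ⁻¹) * NI v 0 ^ ((1:ℝ)/3) * volume (closedBall x ρ) +
      (Sc * κ ^ ((2:ℝ)/3) * κ⁻¹) * NI v 1 ^ ((1:ℝ)/3) * volume (closedBall x ρ) +
      (Sc * κ ^ ((2:ℝ)/3) * κ⁻¹) * NI v 2 ^ ((1:ℝ)/3) * volume (closedBall x ρ) :=
        add_le_add (add_le_add hterm0 hterm1) hterm2
  _ = Sc * κ ^ ((2:ℝ)/3) * κ⁻¹ *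
        (NI v 0 ^ ((1:ℝ)/3) + NI v 1 ^ ((1:ℝ)/3) + NI v 2 ^ ((1:ℝ)/3)) *
        volume (closedBall x ρ) := by ring

end WeightedAux

set_option maxHeartbeats 1000000

/-- The weighted estimate `‖(w v)/r‖_{L'^3_{-3}} ≤ C ‖v‖_{W'^{2,3}_{-1}} ‖w‖_{L'^3_{-1}}`
on `ℝ⁴ \ {0}`: there is `C > 0` such that for every `C²` function `v` on
`ℝ⁴ \ {0}` and every measurable `w`,
`(∫ |w v|³ ‖x‖²)^{1/3} ≤ C (Σ_{j=0}^{2} (∫ ‖D^j v‖³ ‖y‖^{3j-1})^{1/3}) (∫ |w|³ ‖y‖⁻¹)^{1/3}`,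
the inequality being trivially true when the right-hand side is infinite. -/
theorem weighted_product_estimate :
    ∃ C : ℝ, 0 < C ∧
      ∀ v w : EuclideanSpace ℝ (Fin 4) → ℝ,
        ContDiffOn ℝ 2 v {0}ᶜ → Measurable w →
          (∫⁻ x in ({0}ᶜ : Set (EuclideanSpace ℝ (Fin 4))),
              ENNReal.ofReal (|w x * v x| ^ (3 : ℝ) * ‖x‖ ^ (2 : ℝ))) ^ ((1 : ℝ) / 3) ≤
            ENNReal.ofReal C *
              (∑ j ∈ Finset.range 3,
                (∫⁻ y in ({0}ᶜ : Set (EuclideanSpace ℝ (Fin 4))),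
                    ENNReal.ofReal
                      (‖iteratedFDerivWithin ℝ j v ({0}ᶜ : Set (EuclideanSpace ℝ (Fin 4))) y‖ ^ (3 : ℝ) *
                        ‖y‖ ^ (3 * (j : ℝ) - 1))) ^ ((1 : ℝ) / 3)) *
              (∫⁻ y in ({0}ᶜ : Set (EuclideanSpace ℝ (Fin 4))),
                  ENNReal.ofReal (|w y| ^ (3 : ℝ) * ‖y‖ ^ (-1 : ℝ))) ^ ((1 : ℝ) / 3) := by

  classical
  obtain ⟨D, hDtop, hD⟩ := WeightedAux.pointwise_bound
  refine ⟨D.toReal + 1, by positivity, ?_⟩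
  intro v w hv hw
  have hmeasU : MeasurableSet ({0}ᶜ : Set (EuclideanSpace ℝ (Fin 4))) :=
    (measurableSet_singleton 0).compl
  have hSum : (∑ j ∈ Finset.range 3,
      (∫⁻ y in ({0}ᶜ : Set (EuclideanSpace ℝ (Fin 4))),
          ENNReal.ofReal
            (‖iteratedFDerivWithin ℝ j v ({0}ᶜ : Set (EuclideanSpace ℝ (Fin 4))) y‖ ^ (3 : ℝ) *
              ‖y‖ ^ (3 * (j : ℝ) - 1))) ^ ((1 : ℝ) / 3)) =
      WeightedAux.NI v 0 ^ ((1:ℝ)/3) + WeightedAux.NI v 1 ^ ((1:ℝ)/3) + WeightedAux.NI v 2 ^ ((1:ℝ)/3) := by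
    rw [Finset.sum_range_succ, Finset.sum_range_succ, Finset.sum_range_one]
    rfl
  rw [hSum]
  set N : ℝ≥0∞ := WeightedAux.NI v 0 ^ ((1:ℝ)/3) + WeightedAux.NI v 1 ^ ((1:ℝ)/3) + WeightedAux.NI v 2 ^ ((1:ℝ)/3) with hNdef
  set W : ℝ≥0∞ := ∫⁻ y in ({0}ᶜ : Set (EuclideanSpace ℝ (Fin 4))),
    ENNReal.ofReal (|w y| ^ (3 : ℝ) * ‖y‖ ^ (-1 : ℝ)) with hWdef
  have hWm : Measurable fun y : EuclideanSpace ℝ (Fin 4) =>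
      ENNReal.ofReal (|w y| ^ (3 : ℝ) * ‖y‖ ^ (-1 : ℝ)) := by
    have h1 : Measurable fun y : EuclideanSpace ℝ (Fin 4) => |w y| ^ (3:ℝ) := by fun_prop
    have h2 : Measurable fun y : EuclideanSpace ℝ (Fin 4) => ‖y‖ ^ (-(1:ℝ)) := by fun_prop
    have h2' : Measurable fun y : EuclideanSpace ℝ (Fin 4) => ‖y‖ ^ ((-1:ℝ)) := h2
    exact (h1.mul h2').ennreal_ofReal
  have hDle : D ≤ ENNReal.ofReal (D.toReal + 1) := by
    calc D = ENNReal.ofReal D.toReal := (ENNReal.ofReal_toReal hDtop).symm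
    _ ≤ ENNReal.ofReal (D.toReal + 1) := ENNReal.ofReal_le_ofReal (by linarith)
  by_cases hW0 : W = 0
  · -- w vanishes a.e.
    have hwzero : ∀ᵐ y ∂(volume.restrict ({0}ᶜ : Set (EuclideanSpace ℝ (Fin 4)))),
        ENNReal.ofReal (|w y| ^ (3:ℝ) * ‖y‖ ^ (-1:ℝ)) = 0 :=
      (lintegral_eq_zero_iff' hWm.aemeasurable).1 hW0
    have hL : (∫⁻ x in ({0}ᶜ : Set (EuclideanSpace ℝ (Fin 4))),
        ENNReal.ofReal (|w x * v x| ^ (3 : ℝ) * ‖x‖ ^ (2 : ℝ))) = 0 := by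
      have hzero : ∀ᵐ x ∂(volume.restrict ({0}ᶜ : Set (EuclideanSpace ℝ (Fin 4)))),
          ENNReal.ofReal (|w x * v x| ^ (3 : ℝ) * ‖x‖ ^ (2 : ℝ)) = 0 := by
        filter_upwards [hwzero, ae_restrict_mem hmeasU] with y h1 h2
        have hy0 : y ≠ 0 := by simpa using h2
        have hyn : (0:ℝ) < ‖y‖ := norm_pos_iff.2 hy0
        rw [ENNReal.ofReal_eq_zero] at h1
        have h4 : |w y| = 0 := by
          by_contra hne
          have h5 : 0 < |w y| := (abs_nonneg _).lt_of_ne (Ne.symm hne)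
          have h6 : 0 < |w y| ^ (3:ℝ) := Real.rpow_pos_of_pos h5 _
          have h7 : 0 < ‖y‖ ^ (-1:ℝ) := Real.rpow_pos_of_pos hyn _
          nlinarith
        have h8 : w y * v y = 0 := by
          rw [abs_eq_zero.1 h4, zero_mul]
        rw [h8, abs_zero, Real.zero_rpow (by norm_num : (3:ℝ) ≠ 0), zero_mul,
          ENNReal.ofReal_zero]
      calc (∫⁻ x in ({0}ᶜ : Set (EuclideanSpace ℝ (Fin 4))),
          ENNReal.ofReal (|w x * v x| ^ (3 : ℝ) * ‖x‖ ^ (2 : ℝ)))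
          = ∫⁻ _ in ({0}ᶜ : Set (EuclideanSpace ℝ (Fin 4))), 0 := lintegral_congr_ae hzero
      _ = 0 := lintegral_zero
    rw [hL, ENNReal.zero_rpow_of_pos (by norm_num)]
    exact zero_le
  by_cases hNtop : N = ⊤
  · have hW13 : W ^ ((1:ℝ)/3) ≠ 0 := by
      intro h
      rcases ENNReal.rpow_eq_zero_iff.1 h with ⟨h1, _⟩ | ⟨_, h2⟩
      · exact hW0 h1
      · norm_num at h2
    have hC0 : ENNReal.ofReal (D.toReal + 1) ≠ 0 := by
      rw [← ENNReal.ofReal_zero, Ne, ENNReal.ofReal_eq_ofReal_iff (by positivity) le_rfl]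
      · positivity
    have htop : ENNReal.ofReal (D.toReal + 1) * N * W ^ ((1:ℝ)/3) = ⊤ := by
      rw [hNtop, ENNReal.mul_top hC0, ENNReal.top_mul hW13]
    rw [htop]
    exact le_top
  -- main case
  have hDN : D * N ≠ ⊤ := ENNReal.mul_ne_top hDtop hNtop
  have hpt : ∀ᵐ x ∂(volume.restrict ({0}ᶜ : Set (EuclideanSpace ℝ (Fin 4)))),
      ENNReal.ofReal (|w x * v x| ^ (3 : ℝ) * ‖x‖ ^ (2 : ℝ)) ≤
      ENNReal.ofReal (|w x| ^ (3:ℝ) * ‖x‖ ^ (-1:ℝ)) * (D * N) ^ (3:ℝ) := by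
    filter_upwards [ae_restrict_mem hmeasU] with y hy
    have hy0 : y ≠ 0 := by simpa using hy
    have hyn : (0:ℝ) < ‖y‖ := norm_pos_iff.2 hy0
    have hvb := hD v hv y hy0
    have hid : ENNReal.ofReal (|w y * v y| ^ (3:ℝ) * ‖y‖ ^ (2:ℝ)) =
        ENNReal.ofReal (|w y| ^ (3:ℝ) * ‖y‖ ^ (-1:ℝ)) *
          ENNReal.ofReal (|v y| * ‖y‖) ^ (3:ℝ) := by
      rw [ENNReal.ofReal_rpow_of_nonneg (by positivity) (by norm_num : (0:ℝ) ≤ 3),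
        ← ENNReal.ofReal_mul (by positivity)]
      congr 1
      have h3 : ‖y‖ ^ (-1:ℝ) * ‖y‖ ^ (3:ℝ) = ‖y‖ ^ (2:ℝ) := by
        rw [← Real.rpow_add hyn]; norm_num
      calc |w y * v y| ^ (3:ℝ) * ‖y‖ ^ (2:ℝ)
          = |w y| ^ (3:ℝ) * |v y| ^ (3:ℝ) * (‖y‖ ^ (-1:ℝ) * ‖y‖ ^ (3:ℝ)) := by
            rw [h3, abs_mul, Real.mul_rpow (abs_nonneg _) (abs_nonneg _)]
      _ = |w y| ^ (3:ℝ) * ‖y‖ ^ (-1:ℝ) * (|v y| ^ (3:ℝ) * ‖y‖ ^ (3:ℝ)) := by ring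
      _ = |w y| ^ (3:ℝ) * ‖y‖ ^ (-1:ℝ) * (|v y| * ‖y‖) ^ (3:ℝ) := by
            rw [Real.mul_rpow (abs_nonneg _) hyn.le]
    rw [hid]
    exact mul_le_mul_right (ENNReal.rpow_le_rpow hvb (by norm_num)) _
  have hL : (∫⁻ x in ({0}ᶜ : Set (EuclideanSpace ℝ (Fin 4))),
      ENNReal.ofReal (|w x * v x| ^ (3 : ℝ) * ‖x‖ ^ (2 : ℝ))) ≤ W * (D * N) ^ (3:ℝ) := by
    refine (lintegral_mono_ae hpt).trans (le_of_eq ?_)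
    rw [lintegral_mul_const' _ _ (ENNReal.rpow_ne_top_of_nonneg (by norm_num) hDN)]
  calc (∫⁻ x in ({0}ᶜ : Set (EuclideanSpace ℝ (Fin 4))),
      ENNReal.ofReal (|w x * v x| ^ (3 : ℝ) * ‖x‖ ^ (2 : ℝ))) ^ ((1:ℝ)/3)
      ≤ (W * (D * N) ^ (3:ℝ)) ^ ((1:ℝ)/3) := ENNReal.rpow_le_rpow hL (by norm_num)
  _ = W ^ ((1:ℝ)/3) * ((D * N) ^ (3:ℝ)) ^ ((1:ℝ)/3) :=
      ENNReal.mul_rpow_of_nonneg _ _ (by norm_num)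
  _ = W ^ ((1:ℝ)/3) * (D * N) := by
      rw [← ENNReal.rpow_mul]
      norm_num
  _ = D * N * W ^ ((1:ℝ)/3) := by ring
  _ ≤ ENNReal.ofReal (D.toReal + 1) * N * W ^ ((1:ℝ)/3) :=
      mul_le_mul_left (mul_le_mul_left hDle N) _
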